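/- arXiv:math/0308221 — 11 statements merged into one kernel-verified Lean document; each statement's English description precedes it below -/
import Mathlib

section
/- For any matrices M₁, M₂, M₃ ∈ SL(2,ℂ) one has the trace identity Tr(M₂⁻¹M₃M₂M₁) = Tr(M₂)·Tr(M₃M₂M₁) + Tr(M₁)·Tr(M₃) − Tr(M₁M₃) − Tr(M₁M₂)·Tr(M₂M₃). -/
open Matrix

lemma tr_adj_mul (A B : Matrix (Fin 2) (Fin 2) ℂ) :
    (A * B.adjugate).trace = A.trace * B.trace - (A * B).trace := by
  rw [Matrix.adjugate_fin_two]
  simp [Matrix.trace_fin_two, Matrix.mul_apply, Fin.sum_univ_two]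
  ring

lemma key (A B : Matrix.SpecialLinearGroup (Fin 2) ℂ) :
    ((A * B : Matrix.SpecialLinearGroup (Fin 2) ℂ) : Matrix (Fin 2) (Fin 2) ℂ).trace =
      (A : Matrix (Fin 2) (Fin 2) ℂ).trace * (B : Matrix (Fin 2) (Fin 2) ℂ).trace -
      ((A * B⁻¹ : Matrix.SpecialLinearGroup (Fin 2) ℂ) : Matrix (Fin 2) (Fin 2) ℂ).trace := by
  have h : ((A * B⁻¹ : Matrix.SpecialLinearGroup (Fin 2) ℂ) : Matrix (Fin 2) (Fin 2) ℂ)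
      = (A : Matrix (Fin 2) (Fin 2) ℂ) * (B : Matrix (Fin 2) (Fin 2) ℂ).adjugate := by
    simp [Matrix.SpecialLinearGroup.coe_mul, Matrix.SpecialLinearGroup.coe_inv]
  rw [h, tr_adj_mul]
  simp [Matrix.SpecialLinearGroup.coe_mul]

/-- For matrices `M₁ M₂ M₃ ∈ SL(2,ℂ)`:
`Tr(M₂⁻¹M₃M₂M₁) = Tr(M₂)Tr(M₃M₂M₁) + Tr(M₁)Tr(M₃) − Tr(M₁M₃) − Tr(M₁M₂)Tr(M₂M₃)`. -/
theorem stmt0 (M₁ M₂ M₃ : Matrix.SpecialLinearGroup (Fin 2) ℂ) :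
    ((M₂⁻¹ * M₃ * M₂ * M₁ : Matrix.SpecialLinearGroup (Fin 2) ℂ) : Matrix (Fin 2) (Fin 2) ℂ).trace =
      ((M₂ : Matrix (Fin 2) (Fin 2) ℂ)).trace *
        ((M₃ * M₂ * M₁ : Matrix.SpecialLinearGroup (Fin 2) ℂ) : Matrix (Fin 2) (Fin 2) ℂ).trace
      + ((M₁ : Matrix (Fin 2) (Fin 2) ℂ)).trace * ((M₃ : Matrix (Fin 2) (Fin 2) ℂ)).trace
      - ((M₁ * M₃ : Matrix.SpecialLinearGroup (Fin 2) ℂ) : Matrix (Fin 2) (Fin 2) ℂ).trace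
      - ((M₁ * M₂ : Matrix.SpecialLinearGroup (Fin 2) ℂ) : Matrix (Fin 2) (Fin 2) ℂ).trace *
        ((M₂ * M₃ : Matrix.SpecialLinearGroup (Fin 2) ℂ) : Matrix (Fin 2) (Fin 2) ℂ).trace := by
  have t0 : ((M₂⁻¹ * M₃ * M₂ * M₁ : Matrix.SpecialLinearGroup (Fin 2) ℂ) :
      Matrix (Fin 2) (Fin 2) ℂ).trace
      = (((M₃ * M₂ * M₁) * M₂⁻¹ : Matrix.SpecialLinearGroup (Fin 2) ℂ) :
        Matrix (Fin 2) (Fin 2) ℂ).trace := by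
    have e : (M₂⁻¹ * M₃ * M₂ * M₁ : Matrix.SpecialLinearGroup (Fin 2) ℂ)
        = M₂⁻¹ * (M₃ * M₂ * M₁) := by group
    rw [e]
    simp only [Matrix.SpecialLinearGroup.coe_mul]
    rw [Matrix.trace_mul_comm]
  have k1 := key (M₃ * M₂ * M₁) M₂
  have e3 : ((M₃ * M₂ * M₁) * M₂ : Matrix.SpecialLinearGroup (Fin 2) ℂ)
      = (M₃ * M₂) * (M₁ * M₂) := by group
  have e4 : (((M₃ * M₂ * M₁) * M₂ : Matrix.SpecialLinearGroup (Fin 2) ℂ) :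
      Matrix (Fin 2) (Fin 2) ℂ).trace
      = (((M₁ * M₂) * (M₃ * M₂) : Matrix.SpecialLinearGroup (Fin 2) ℂ) :
        Matrix (Fin 2) (Fin 2) ℂ).trace := by
    rw [e3]
    simp only [Matrix.SpecialLinearGroup.coe_mul]
    rw [Matrix.trace_mul_comm]
  have k2 := key (M₁ * M₂) (M₃ * M₂)
  have e5 : ((M₁ * M₂) * (M₃ * M₂)⁻¹ : Matrix.SpecialLinearGroup (Fin 2) ℂ)
      = M₁ * M₃⁻¹ := by group
  rw [e5] at k2
  have k3 := key M₁ M₃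
  have e6 : (((M₃ * M₂ : Matrix.SpecialLinearGroup (Fin 2) ℂ)) :
      Matrix (Fin 2) (Fin 2) ℂ).trace
      = (((M₂ * M₃ : Matrix.SpecialLinearGroup (Fin 2) ℂ)) :
        Matrix (Fin 2) (Fin 2) ℂ).trace := by
    simp only [Matrix.SpecialLinearGroup.coe_mul]
    rw [Matrix.trace_mul_comm]
  rw [e6] at k2
  rw [e4] at k1
  rw [t0]
  linear_combination k1 - k2 + k3
end

section
/- For any matrices M₁, M₂, M₃ ∈ SL(2,ℂ), the invariant m₃₂₁ = Tr(M₃M₂M₁) satisfies the Fricke relation m₃₂₁² − P·m₃₂₁ + Q = 4, and moreover Tr(M₁M₂M₃) = P − m₃₂₁ (i.e. Tr(M₁M₂M₃) is the other root of the quadratic). -/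
open Matrix

/-- The Fricke relation `m₃₂₁² − P·m₃₂₁ + Q = 4` for traces of an SL(2,ℂ) triple,
together with `Tr(M₁M₂M₃) = P − m₃₂₁`. -/
theorem stmt1 (M₁ M₂ M₃ : Matrix.SpecialLinearGroup (Fin 2) ℂ)
    (m₁ m₂ m₃ m₁₂ m₂₃ m₁₃ m₃₂₁ P Q : ℂ)
    (hm₁ : m₁ = ((M₁ : Matrix (Fin 2) (Fin 2) ℂ)).trace)
    (hm₂ : m₂ = ((M₂ : Matrix (Fin 2) (Fin 2) ℂ)).trace)
    (hm₃ : m₃ = ((M₃ : Matrix (Fin 2) (Fin 2) ℂ)).trace)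
    (hm₁₂ : m₁₂ = ((M₁ * M₂ : Matrix.SpecialLinearGroup (Fin 2) ℂ) : Matrix (Fin 2) (Fin 2) ℂ).trace)
    (hm₂₃ : m₂₃ = ((M₂ * M₃ : Matrix.SpecialLinearGroup (Fin 2) ℂ) : Matrix (Fin 2) (Fin 2) ℂ).trace)
    (hm₁₃ : m₁₃ = ((M₁ * M₃ : Matrix.SpecialLinearGroup (Fin 2) ℂ) : Matrix (Fin 2) (Fin 2) ℂ).trace)
    (hm₃₂₁ : m₃₂₁ = ((M₃ * M₂ * M₁ : Matrix.SpecialLinearGroup (Fin 2) ℂ) : Matrix (Fin 2) (Fin 2) ℂ).trace)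
    (hP : P = m₁ * m₂₃ + m₂ * m₁₃ + m₃ * m₁₂ - m₁ * m₂ * m₃)
    (hQ : Q = m₁ ^ 2 + m₂ ^ 2 + m₃ ^ 2 + m₁₂ ^ 2 + m₂₃ ^ 2 + m₁₃ ^ 2 + m₁₂ * m₂₃ * m₁₃
        - m₁ * m₂ * m₁₂ - m₂ * m₃ * m₂₃ - m₁ * m₃ * m₁₃) :
    m₃₂₁ ^ 2 - P * m₃₂₁ + Q = 4 ∧
    ((M₁ * M₂ * M₃ : Matrix.SpecialLinearGroup (Fin 2) ℂ) : Matrix (Fin 2) (Fin 2) ℂ).trace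
      = P - m₃₂₁ := by
  subst hm₁ hm₂ hm₃ hm₁₂ hm₂₃ hm₁₃ hm₃₂₁ hP hQ
  have h1 := M₁.2
  have h2 := M₂.2
  have h3 := M₃.2
  rw [Matrix.det_fin_two] at h1 h2 h3
  set a1 := (M₁ : Matrix (Fin 2) (Fin 2) ℂ) 0 0
  set b1 := (M₁ : Matrix (Fin 2) (Fin 2) ℂ) 0 1
  set c1 := (M₁ : Matrix (Fin 2) (Fin 2) ℂ) 1 0
  set d1 := (M₁ : Matrix (Fin 2) (Fin 2) ℂ) 1 1
  set a2 := (M₂ : Matrix (Fin 2) (Fin 2) ℂ) 0 0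
  set b2 := (M₂ : Matrix (Fin 2) (Fin 2) ℂ) 0 1
  set c2 := (M₂ : Matrix (Fin 2) (Fin 2) ℂ) 1 0
  set d2 := (M₂ : Matrix (Fin 2) (Fin 2) ℂ) 1 1
  set a3 := (M₃ : Matrix (Fin 2) (Fin 2) ℂ) 0 0
  set b3 := (M₃ : Matrix (Fin 2) (Fin 2) ℂ) 0 1
  set c3 := (M₃ : Matrix (Fin 2) (Fin 2) ℂ) 1 0
  set d3 := (M₃ : Matrix (Fin 2) (Fin 2) ℂ) 1 1
  simp only [Matrix.SpecialLinearGroup.coe_mul, Matrix.trace_fin_two, Matrix.mul_apply,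
    Fin.sum_univ_two]
  constructor
  · linear_combination
      (2 - d3 ^ 2 - a3 ^ 2 - d2 ^ 2 + d2 ^ 2 * a3 * d3 - c2 * d2 * b3 * d3 + c2 * d2 * a3 * b3 - c2 ^ 2 * b3 ^ 2 - b2 * d2 * c3 * d3 + b2 * d2 * a3 * c3 - b2 ^ 2 * c3 ^ 2 + a2 * d2 * d3 ^ 2 - 2 * a2 * d2 * a3 * d3 + a2 * d2 * a3 ^ 2 + a2 * c2 * b3 * d3 - a2 * c2 * a3 * b3 + a2 * b2 * c3 * d3 - a2 * b2 * a3 * c3 - a2 ^ 2 + a2 ^ 2 * a3 * d3) * h1 +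
      (2 - 2 * a3 * d3 - d1 ^ 2 + d1 ^ 2 * a3 * d3 - c1 * d1 * b3 * d3 + c1 * d1 * a3 * b3 - c1 ^ 2 * b3 ^ 2 - b1 * d1 * c3 * d3 + b1 * d1 * a3 * c3 + b1 * c1 * d3 ^ 2 - 2 * b1 * c1 * a3 * d3 + b1 * c1 * a3 ^ 2 - b1 ^ 2 * c3 ^ 2 + a1 * c1 * b3 * d3 - a1 * c1 * a3 * b3 + a1 * b1 * c3 * d3 - a1 * b1 * a3 * c3 - a1 ^ 2 + a1 ^ 2 * a3 * d3) * h2 +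
      (-2 * b2 * c2 + d1 ^ 2 * b2 * c2 - c1 * d1 * b2 * d2 + c1 * d1 * a2 * b2 - c1 ^ 2 * b2 ^ 2 - b1 * d1 * c2 * d2 + b1 * d1 * a2 * c2 - 2 * b1 * c1 + b1 * c1 * d2 ^ 2 - 2 * b1 * c1 * b2 * c2 + b1 * c1 * a2 ^ 2 - b1 ^ 2 * c2 ^ 2 + a1 * c1 * b2 * d2 - a1 * c1 * a2 * b2 + a1 * b1 * c2 * d2 - a1 * b1 * a2 * c2 + a1 ^ 2 * b2 * c2) * h3
  · ring
end

section
/- Let r_i = 1 + e_i⊗α_i (i = 1,2,3) be invertible pseudo-reflections in GL(3,ℂ) (so t_i² := 1 + α_i(e_i) ≠ 0). Then the analogue of the Fricke relation holds: (t₃²t₁₂ + t₂²t₁₃ + t₁²t₂₃ − t₁²t₂² − t₂²t₃² − t₁²t₃² − t₃₂₁′)·(t₃₂₁ + t₁² + t₂² + t₃² − t₁₂ − t₁₃ − t₂₃) = (t₁₂ − t₁² − t₂²)(t₁₃ − t₁² − t₃²)(t₂₃ − t₂² − t₃²), where t_{ij} := Tr(r_ir_j) − 1, t₃₂₁ :=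 Tr(r₃r₂r₁) and t₃₂₁′ := det(r₃r₂r₁)·Tr((r₃r₂r₁)⁻¹). -/
open Matrix

lemma tvv (w v : Fin 3 → ℂ) : (vecMulVec w v).trace = v ⬝ᵥ w := by
  simp [Matrix.trace, Matrix.diag, vecMulVec_apply, dotProduct, mul_comm]

lemma vvmul (w v w' v' : Fin 3 → ℂ) :
    vecMulVec w v * vecMulVec w' v' = (v ⬝ᵥ w') • vecMulVec w v' := by
  ext i j
  simp only [mul_apply, vecMulVec_apply, Matrix.smul_apply, smul_eq_mul, dotProduct,
    Finset.sum_mul]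
  apply Finset.sum_congr rfl
  intros; ring

lemma detvv (w v : Fin 3 → ℂ) : (1 + vecMulVec w v).det = 1 + v ⬝ᵥ w := by
  simp [Matrix.det_fin_three, vecMulVec_apply, dotProduct, Fin.sum_univ_three,
    Matrix.one_apply]
  ring

lemma invvv (w v : Fin 3 → ℂ) (h : 1 + v ⬝ᵥ w ≠ 0) :
    (1 + vecMulVec w v)⁻¹ = 1 - (1 + v ⬝ᵥ w)⁻¹ • vecMulVec w v := by
  apply Matrix.inv_eq_right_inv
  rw [mul_sub, mul_one, mul_smul_comm, add_mul, one_mul, vvmul, smul_add, smul_smul,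
    ← add_smul]
  have hc : (1 + v ⬝ᵥ w)⁻¹ + (1 + v ⬝ᵥ w)⁻¹ * (v ⬝ᵥ w) = 1 := by
    field_simp [dotProduct, Fin.sum_univ_three] at h ⊢
  rw [hc, one_smul, add_sub_cancel_right]
set_option maxHeartbeats 1600000 in
/-- The 3×3 analogue of the Fricke relation for a triple of invertible
pseudo-reflections `rᵢ = 1 + eᵢ⊗αᵢ` in GL(3,ℂ).  Here `r 0, r 1, r 2` play the
roles of `r₁, r₂, r₃`; `t1, t2, t3` denote `t₁², t₂², t₃²`; `tij = Tr(rᵢrⱼ) − 1`;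
`t₃₂₁ = Tr(r₃r₂r₁)`; `t₃₂₁′ = det(r₃r₂r₁)·Tr((r₃r₂r₁)⁻¹)`. -/
theorem stmt5 (e a : Fin 3 → Fin 3 → ℂ)
    (ht : ∀ i, 1 + a i ⬝ᵥ e i ≠ 0)
    (r : Fin 3 → Matrix (Fin 3) (Fin 3) ℂ)
    (hr : ∀ i, r i = 1 + vecMulVec (e i) (a i))
    (t1 t2 t3 t12 t23 t13 t321 t321' : ℂ)
    (ht1 : t1 = 1 + a 0 ⬝ᵥ e 0) (ht2 : t2 = 1 + a 1 ⬝ᵥ e 1) (ht3 : t3 = 1 + a 2 ⬝ᵥ e 2)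
    (ht12 : t12 = (r 0 * r 1).trace - 1)
    (ht23 : t23 = (r 1 * r 2).trace - 1)
    (ht13 : t13 = (r 0 * r 2).trace - 1)
    (ht321 : t321 = (r 2 * r 1 * r 0).trace)
    (ht321' : t321' = (r 2 * r 1 * r 0).det * ((r 2 * r 1 * r 0)⁻¹).trace) :
    (t3 * t12 + t2 * t13 + t1 * t23 - t1 * t2 - t2 * t3 - t1 * t3 - t321')
        * (t321 + t1 + t2 + t3 - t12 - t13 - t23) =
      (t12 - t1 - t2) * (t13 - t1 - t3) * (t23 - t2 - t3) := by
  have hdet : (r 2 * r 1 * r 0).det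
      = (1 + a 2 ⬝ᵥ e 2) * (1 + a 1 ⬝ᵥ e 1) * (1 + a 0 ⬝ᵥ e 0) := by
    rw [Matrix.det_mul, Matrix.det_mul, hr 0, hr 1, hr 2, detvv, detvv, detvv]
  have hinv : (r 2 * r 1 * r 0)⁻¹ = (r 0)⁻¹ * ((r 1)⁻¹ * (r 2)⁻¹) := by
    rw [Matrix.mul_inv_rev, Matrix.mul_inv_rev]
  have hri : ∀ i, (r i)⁻¹ = 1 - (1 + a i ⬝ᵥ e i)⁻¹ • vecMulVec (e i) (a i) := by
    intro i; rw [hr i]; exact invvv _ _ (ht i)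
  have key : ∀ i j : Fin 3, (r i * r j).trace
      = 3 + a i ⬝ᵥ e i + a j ⬝ᵥ e j + (a i ⬝ᵥ e j) * (a j ⬝ᵥ e i) := by
    intro i j
    rw [hr i, hr j]
    simp only [add_mul, mul_add, one_mul, mul_one, vvmul, trace_add,
      trace_smul, trace_one, tvv, smul_eq_mul, Fintype.card_fin, Nat.cast_ofNat]
    ring
  have key3 : (r 2 * r 1 * r 0).trace
      = 3 + a 0 ⬝ᵥ e 0 + a 1 ⬝ᵥ e 1 + a 2 ⬝ᵥ e 2
        + (a 2 ⬝ᵥ e 1) * (a 1 ⬝ᵥ e 2) + (a 2 ⬝ᵥ e 0) * (a 0 ⬝ᵥ e 2)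
        + (a 1 ⬝ᵥ e 0) * (a 0 ⬝ᵥ e 1)
        + (a 2 ⬝ᵥ e 1) * (a 1 ⬝ᵥ e 0) * (a 0 ⬝ᵥ e 2) := by
    rw [hr 0, hr 1, hr 2]
    simp only [add_mul, mul_add, one_mul, mul_one, vvmul, trace_add,
      trace_smul, trace_one, tvv, smul_eq_mul, smul_smul, smul_mul_assoc,
      mul_smul_comm, Fintype.card_fin, Nat.cast_ofNat]
    ring
  have keyI : ((r 2 * r 1 * r 0)⁻¹).trace
      = 3 - (1 + a 0 ⬝ᵥ e 0)⁻¹ * (a 0 ⬝ᵥ e 0)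
        - (1 + a 1 ⬝ᵥ e 1)⁻¹ * (a 1 ⬝ᵥ e 1)
        - (1 + a 2 ⬝ᵥ e 2)⁻¹ * (a 2 ⬝ᵥ e 2)
        + (1 + a 0 ⬝ᵥ e 0)⁻¹ * (1 + a 1 ⬝ᵥ e 1)⁻¹ * ((a 0 ⬝ᵥ e 1) * (a 1 ⬝ᵥ e 0))
        + (1 + a 0 ⬝ᵥ e 0)⁻¹ * (1 + a 2 ⬝ᵥ e 2)⁻¹ * ((a 0 ⬝ᵥ e 2) * (a 2 ⬝ᵥ e 0))
        + (1 + a 1 ⬝ᵥ e 1)⁻¹ * (1 + a 2 ⬝ᵥ e 2)⁻¹ * ((a 1 ⬝ᵥ e 2) * (a 2 ⬝ᵥ e 1))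
        - (1 + a 0 ⬝ᵥ e 0)⁻¹ * (1 + a 1 ⬝ᵥ e 1)⁻¹ * (1 + a 2 ⬝ᵥ e 2)⁻¹
            * ((a 0 ⬝ᵥ e 1) * (a 1 ⬝ᵥ e 2) * (a 2 ⬝ᵥ e 0)) := by
    rw [hinv, hri 0, hri 1, hri 2]
    simp only [sub_mul, mul_sub, one_mul, mul_one, vvmul, trace_add, trace_sub,
      trace_smul, trace_one, tvv, smul_eq_mul, smul_smul, smul_mul_assoc,
      mul_smul_comm, Fintype.card_fin, Nat.cast_ofNat]
    ring
  have keyD : (r 2 * r 1 * r 0).det * ((r 2 * r 1 * r 0)⁻¹).trace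
      = 3 * ((1 + a 0 ⬝ᵥ e 0) * (1 + a 1 ⬝ᵥ e 1) * (1 + a 2 ⬝ᵥ e 2))
        - (a 0 ⬝ᵥ e 0) * ((1 + a 1 ⬝ᵥ e 1) * (1 + a 2 ⬝ᵥ e 2))
        - (a 1 ⬝ᵥ e 1) * ((1 + a 0 ⬝ᵥ e 0) * (1 + a 2 ⬝ᵥ e 2))
        - (a 2 ⬝ᵥ e 2) * ((1 + a 0 ⬝ᵥ e 0) * (1 + a 1 ⬝ᵥ e 1))
        + (a 0 ⬝ᵥ e 1) * (a 1 ⬝ᵥ e 0) * (1 + a 2 ⬝ᵥ e 2)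
        + (a 0 ⬝ᵥ e 2) * (a 2 ⬝ᵥ e 0) * (1 + a 1 ⬝ᵥ e 1)
        + (a 1 ⬝ᵥ e 2) * (a 2 ⬝ᵥ e 1) * (1 + a 0 ⬝ᵥ e 0)
        - (a 0 ⬝ᵥ e 1) * (a 1 ⬝ᵥ e 2) * (a 2 ⬝ᵥ e 0) := by
    rw [hdet, keyI]
    obtain ⟨h0, h1, h2⟩ : (1 + a 0 ⬝ᵥ e 0 ≠ 0) ∧ (1 + a 1 ⬝ᵥ e 1 ≠ 0) ∧ (1 + a 2 ⬝ᵥ e 2 ≠ 0) :=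
      ⟨ht 0, ht 1, ht 2⟩
    generalize a 0 ⬝ᵥ e 0 = u00 at h0 ⊢
    generalize a 1 ⬝ᵥ e 1 = u11 at h1 ⊢
    generalize a 2 ⬝ᵥ e 2 = u22 at h2 ⊢
    generalize a 0 ⬝ᵥ e 1 = u01
    generalize a 1 ⬝ᵥ e 0 = u10
    generalize a 0 ⬝ᵥ e 2 = u02
    generalize a 2 ⬝ᵥ e 0 = u20
    generalize a 1 ⬝ᵥ e 2 = u12
    generalize a 2 ⬝ᵥ e 1 = u21
    have hc0 : (1 + u00)⁻¹ * (1 + u00) = 1 := inv_mul_cancel₀ h0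
    have hc1 : (1 + u11)⁻¹ * (1 + u11) = 1 := inv_mul_cancel₀ h1
    have hc2 : (1 + u22)⁻¹ * (1 + u22) = 1 := inv_mul_cancel₀ h2
    generalize (1 + u00)⁻¹ = c0 at hc0 ⊢
    generalize (1 + u11)⁻¹ = c1 at hc1 ⊢
    generalize (1 + u22)⁻¹ = c2 at hc2 ⊢
    linear_combination
      (-u00 * (1 + u11) * (1 + u22) + u01 * u10 * (1 + u22) + u02 * u20 * (1 + u11)
          - u01 * u12 * u20) * hc0
      + (c0 * (1 + u00) * (u01 * u10 * (1 + u22) - u01 * u12 * u20)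
          - u11 * (1 + u00) * (1 + u22) + u12 * u21 * (1 + u00)) * hc1
      + (-u22 * (1 + u00) * (1 + u11) + c0 * (1 + u00) * (u02 * u20) * (1 + u11)
          + c1 * (1 + u11) * (u12 * u21) * (1 + u00)
          - c0 * c1 * (1 + u00) * (1 + u11) * (u01 * u12 * u20)) * hc2
  subst ht1 ht2 ht3 ht12 ht23 ht13 ht321 ht321'
  rw [keyD, key3, key 0 1, key 1 2, key 0 2]
  ring
end

section
/- Let t₁,t₂,t₃,n₁,n₂,n₃ ∈ ℂ* satisfy t₁t₂t₃ = n₁n₂n₃, and let t₁₂,t₂₃,t₁₃ ∈ ℂ. Set t₃₂₁ := n₁²+n₂²+n₃², t₃₂₁′ := n₁²n₂²+n₂²n₃²+n₁²n₃², and define m_i := t_i/n₁ + n₁/t_i (i=1,2,3), m₁₂ := t₁₂/(t₁t₂), m₂₃ := t₂₃/(t₂t₃), m₁₃ := t₁₃/(t₁t₃), m₃₂₁ := n₂/n₃ + n₃/n₂. Then the following two identities hold (expressing that the map φ intertwines the braid group actions on pseudo-reflection data and on SL(2,ℂ)-triple data): (i) (t₃₂₁ + t₁² + t₃² − t₁₃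 + (t₃₂₁′ − t₁₂t₂₃)/t₂²)/(t₁t₃) = m₂m₃₂₁ + m₁m₃ − m₁₃ − m₁₂m₂₃; (ii) (t₃₂₁ + t₂² + t₃² − t₂₃ + (t₃₂₁′ − t₁₃t₁₂)/t₁²)/(t₂t₃) = m₁m₃₂₁ + m₂m₃ − m₂₃ − m₁₃m₁₂. -/
set_option maxHeartbeats 1000000 in
/-- The two nontrivial components of the braid-group equivariance of the map φ
from pseudo-reflection data to SL(2,ℂ)-triple data. -/
theorem stmt6 (t1 t2 t3 n1 n2 n3 : ℂ)
    (ht1 : t1 ≠ 0) (ht2 : t2 ≠ 0) (ht3 : t3 ≠ 0)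
    (hn1 : n1 ≠ 0) (hn2 : n2 ≠ 0) (hn3 : n3 ≠ 0)
    (hprod : t1 * t2 * t3 = n1 * n2 * n3)
    (t12 t23 t13 : ℂ)
    (t321 t321' m1 m2 m3 m12 m23 m13 m321 : ℂ)
    (ht321 : t321 = n1 ^ 2 + n2 ^ 2 + n3 ^ 2)
    (ht321' : t321' = n1 ^ 2 * n2 ^ 2 + n2 ^ 2 * n3 ^ 2 + n1 ^ 2 * n3 ^ 2)
    (hm1 : m1 = t1 / n1 + n1 / t1)
    (hm2 : m2 = t2 / n1 + n1 / t2)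
    (hm3 : m3 = t3 / n1 + n1 / t3)
    (hm12 : m12 = t12 / (t1 * t2))
    (hm23 : m23 = t23 / (t2 * t3))
    (hm13 : m13 = t13 / (t1 * t3))
    (hm321 : m321 = n2 / n3 + n3 / n2) :
    (t321 + t1 ^ 2 + t3 ^ 2 - t13 + (t321' - t12 * t23) / t2 ^ 2) / (t1 * t3)
        = m2 * m321 + m1 * m3 - m13 - m12 * m23 ∧
    (t321 + t2 ^ 2 + t3 ^ 2 - t23 + (t321' - t13 * t12) / t1 ^ 2) / (t2 * t3)
        = m1 * m321 + m2 * m3 - m23 - m13 * m12 := by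
  subst ht321 ht321' hm1 hm2 hm3 hm12 hm23 hm13 hm321
  constructor
  · have hD : n1^2*n2*n3*t1*t2^2*t3 ≠ 0 := by
      exact mul_ne_zero (mul_ne_zero (mul_ne_zero (mul_ne_zero (mul_ne_zero (pow_ne_zero 2 hn1) hn2) hn3) ht1) (pow_ne_zero 2 ht2)) ht3
    apply mul_right_cancel₀ hD
    have e1 : (t2/n1+n1/t2) * (n2/n3+n3/n2) * (n1^2*n2*n3*t1*t2^2*t3)
        = (t2^2+n1^2)*(n2^2+n3^2)*n1*t1*t2*t3 := by field_simp
    have e2 : (t1/n1+n1/t1) * (t3/n1+n1/t3) * (n1^2*n2*n3*t1*t2^2*t3)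
        = (t1^2+n1^2)*(t3^2+n1^2)*n2*n3*t2^2 := by field_simp
    have e3 : (t13/(t1*t3)) * (n1^2*n2*n3*t1*t2^2*t3) = n1^2*n2*n3*t2^2*t13 := by
      field_simp
    have e4 : (t12/(t1*t2)) * (t23/(t2*t3)) * (n1^2*n2*n3*t1*t2^2*t3) = n1^2*n2*n3*(t12*t23) := by
      field_simp
    have f1 : ((n1^2+n2^2+n3^2 + t1^2 + t3^2 - t13 + ((n1^2*n2^2+n2^2*n3^2+n1^2*n3^2) - t12*t23)/t2^2)/(t1*t3)) * (n1^2*n2*n3*t1*t2^2*t3)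
        = n1^2*n2*n3*((n1^2+n2^2+n3^2+t1^2+t3^2-t13)*t2^2 + (n1^2*n2^2+n2^2*n3^2+n1^2*n3^2) - t12*t23) := by
      rw [div_mul_eq_mul_div, div_eq_iff (mul_ne_zero ht1 ht3)]
      field_simp; ring
    linear_combination f1 - e1 - e2 + e3 + e4
      - (n2*n3*(n1*n2*n3 + t1*t2*t3) + n1*(t2^2+n1^2)*(n2^2+n3^2)) * hprod
  · have hD : n1^2*n2*n3*t1^2*t2*t3 ≠ 0 := by
      exact mul_ne_zero (mul_ne_zero (mul_ne_zero (mul_ne_zero (mul_ne_zero (pow_ne_zero 2 hn1) hn2) hn3) (pow_ne_zero 2 ht1)) ht2) ht3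
    apply mul_right_cancel₀ hD
    have e1 : (t1/n1+n1/t1) * (n2/n3+n3/n2) * (n1^2*n2*n3*t1^2*t2*t3)
        = (t1^2+n1^2)*(n2^2+n3^2)*n1*t1*t2*t3 := by field_simp
    have e2 : (t2/n1+n1/t2) * (t3/n1+n1/t3) * (n1^2*n2*n3*t1^2*t2*t3)
        = (t2^2+n1^2)*(t3^2+n1^2)*n2*n3*t1^2 := by field_simp
    have e3 : (t23/(t2*t3)) * (n1^2*n2*n3*t1^2*t2*t3) = n1^2*n2*n3*t1^2*t23 := by
      field_simp
    have e4 : (t13/(t1*t3)) * (t12/(t1*t2)) * (n1^2*n2*n3*t1^2*t2*t3) = n1^2*n2*n3*(t13*t12) := by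
      field_simp
    have f1 : ((n1^2+n2^2+n3^2 + t2^2 + t3^2 - t23 + ((n1^2*n2^2+n2^2*n3^2+n1^2*n3^2) - t13*t12)/t1^2)/(t2*t3)) * (n1^2*n2*n3*t1^2*t2*t3)
        = n1^2*n2*n3*((n1^2+n2^2+n3^2+t2^2+t3^2-t23)*t1^2 + (n1^2*n2^2+n2^2*n3^2+n1^2*n3^2) - t13*t12) := by
      rw [div_mul_eq_mul_div, div_eq_iff (mul_ne_zero ht2 ht3)]
      field_simp; ring
    linear_combination f1 - e1 - e2 + e3 + e4
      - (n2*n3*(n1*n2*n3 + t1*t2*t3) + n1*(t1^2+n1^2)*(n2^2+n3^2)) * hprod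
end

section
/- Let t₁,t₂,t₃,n₁,n₂,n₃ ∈ ℂ* satisfy t₁t₂t₃ = n₁n₂n₃ and let t₁₂,t₂₃,t₁₃ ∈ ℂ satisfy the 3×3 Fricke relation (t₃²t₁₂ + t₂²t₁₃ + t₁²t₂₃ − t₁²t₂² − t₂²t₃² − t₁²t₃² − t₃₂₁′)·(t₃₂₁ + t₁² + t₂² + t₃² − t₁₂ − t₁₃ − t₂₃) = (t₁₂ − t₁² − t₂²)(t₁₃ − t₁² − t₃²)(t₂₃ − t₂² − t₃²), where t₃₂₁ := n₁²+n₂²+n₃² and t₃₂₁′ := n₁²n₂²+n₂²n₃²+n₁²n₃². Then the image data under φ satisfies the 2×2 Fricke relation m₃₂₁² − P·m₃₂₁ + Q = 4, where m_i := t_i/n₁ + n₁/t_i, m₁₂ := t₁₂/(t₁t₂), m₂₃ := t₂₃/(t₂t₃), m₁₃ := t₁₃/(t₁t₃), m₃₂₁ := n₂/n₃ + n₃/n₂, P := m₁m₂₃ + m₂m₁₃ + m₃m₁₂ − m₁m₂m₃, and Q := m₁²+m₂²+m₃²+m₁₂²+m₂₃²+m₁₃²+m₁₂m₂₃m₁₃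 − m₁m₂m₁₂ − m₂m₃m₂₃ − m₁m₃m₁₃. -/
/-- The map φ is well defined: pseudo-reflection data satisfying the 3×3 Fricke
relation is sent to SL(2,ℂ)-triple data satisfying the classical Fricke relation. -/
theorem stmt7 (t1 t2 t3 n1 n2 n3 : ℂ)
    (ht1 : t1 ≠ 0) (ht2 : t2 ≠ 0) (ht3 : t3 ≠ 0)
    (hn1 : n1 ≠ 0) (hn2 : n2 ≠ 0) (hn3 : n3 ≠ 0)
    (hprod : t1 * t2 * t3 = n1 * n2 * n3)
    (t12 t23 t13 t321 t321' : ℂ)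
    (ht321 : t321 = n1 ^ 2 + n2 ^ 2 + n3 ^ 2)
    (ht321' : t321' = n1 ^ 2 * n2 ^ 2 + n2 ^ 2 * n3 ^ 2 + n1 ^ 2 * n3 ^ 2)
    (hFricke3 :
      (t3 ^ 2 * t12 + t2 ^ 2 * t13 + t1 ^ 2 * t23
          - t1 ^ 2 * t2 ^ 2 - t2 ^ 2 * t3 ^ 2 - t1 ^ 2 * t3 ^ 2 - t321')
        * (t321 + t1 ^ 2 + t2 ^ 2 + t3 ^ 2 - t12 - t13 - t23) =
      (t12 - t1 ^ 2 - t2 ^ 2) * (t13 - t1 ^ 2 - t3 ^ 2) * (t23 - t2 ^ 2 - t3 ^ 2))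
    (m1 m2 m3 m12 m23 m13 m321 P Q : ℂ)
    (hm1 : m1 = t1 / n1 + n1 / t1)
    (hm2 : m2 = t2 / n1 + n1 / t2)
    (hm3 : m3 = t3 / n1 + n1 / t3)
    (hm12 : m12 = t12 / (t1 * t2))
    (hm23 : m23 = t23 / (t2 * t3))
    (hm13 : m13 = t13 / (t1 * t3))
    (hm321 : m321 = n2 / n3 + n3 / n2)
    (hP : P = m1 * m23 + m2 * m13 + m3 * m12 - m1 * m2 * m3)
    (hQ : Q = m1 ^ 2 + m2 ^ 2 + m3 ^ 2 + m12 ^ 2 + m23 ^ 2 + m13 ^ 2 + m12 * m23 * m13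
        - m1 * m2 * m12 - m2 * m3 * m23 - m1 * m3 * m13) :
    m321 ^ 2 - P * m321 + Q = 4 := by
  have e1 : m1 * (n1 * t1) = t1 ^ 2 + n1 ^ 2 := by rw [hm1]; field_simp
  have e2 : m2 * (n1 * t2) = t2 ^ 2 + n1 ^ 2 := by rw [hm2]; field_simp
  have e3 : m3 * (n1 * t3) = t3 ^ 2 + n1 ^ 2 := by rw [hm3]; field_simp
  have e12 : m12 * (t1 * t2) = t12 := by rw [hm12]; field_simp
  have e23 : m23 * (t2 * t3) = t23 := by rw [hm23]; field_simp
  have e13 : m13 * (t1 * t3) = t13 := by rw [hm13]; field_simp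
  have e321 : m321 * (n2 * n3) = n2 ^ 2 + n3 ^ 2 := by rw [hm321]; field_simp
  have hM : (n1 ^ 4 * t1 ^ 2 * t2 ^ 2 * t3 ^ 2 * n2 ^ 2 * n3 ^ 2 : ℂ) ≠ 0 := by
    simp only [ne_eq, mul_eq_zero, pow_eq_zero_iff, OfNat.ofNat_ne_zero, and_false,
      false_or, not_or]
    exact ⟨⟨⟨⟨⟨by simpa using hn1, by simpa using ht1⟩, by simpa using ht2⟩,
      by simpa using ht3⟩, by simpa using hn2⟩, by simpa using hn3⟩
  subst ht321 ht321' hP hQ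
  have key : (m321 ^ 2 - (m1 * m23 + m2 * m13 + m3 * m12 - m1 * m2 * m3) * m321
      + (m1 ^ 2 + m2 ^ 2 + m3 ^ 2 + m12 ^ 2 + m23 ^ 2 + m13 ^ 2 + m12 * m23 * m13
        - m1 * m2 * m12 - m2 * m3 * m23 - m1 * m3 * m13) - 4)
      * (n1 ^ 4 * t1 ^ 2 * t2 ^ 2 * t3 ^ 2 * n2 ^ 2 * n3 ^ 2) = 0 := by
    linear_combination ((-1)*n1^4*n2^2*n3^2) * hFricke3 + ((-1)*n1^3*n2^3*n3^3*t13 + (-1)*n1^3*n2^3*n3^3*t23 + (-1)*n1^3*n2^3*n3^3*t12 + n1^3*n2^3*n3^5 + n1^3*n2^5*n3^3 + (-1)*n1^5*n2*n3^3*t13 + (-1)*n1^5*n2*n3^3*t23 + (-1)*n1^5*n2*n3^3*t12 + n1^5*n2*n3^5 + (-1)*n1^5*n2^3*n3*t13 + (-1)*n1^5*n2^3*n3*t23 + (-1)*n1^5*n2^3*n3*t12 + 3*n1^5*n2^3*n3^3 + n1^5*n2^5*n3 + n1^7*n2*n3^3 + n1^7*n2^3*n3 + (-1)*t3^2*n1^3*n2*n3^3*t12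 + (-1)*t3^2*n1^3*n2^3*n3*t12 + t3^2*n1^3*n2^3*n3^3 + t3^2*n1^5*n2*n3^3 + t3^2*n1^5*n2^3*n3 + (-1)*t2^2*n1^3*n2*n3^3*t13 + (-1)*t2^2*n1^3*n2^3*n3*t13 + t2^2*n1^3*n2^3*n3^3 + t2^2*n1^5*n2*n3^3 + t2^2*n1^5*n2^3*n3 + t2^2*t3^2*n1^3*n2*n3^3 + t2^2*t3^2*n1^3*n2^3*n3 + (-1)*t1*t2*t3*n1^2*n2^2*n3^2*t13 + (-1)*t1*t2*t3*n1^2*n2^2*n3^2*t23 + (-1)*t1*t2*t3*n1^2*n2^2*n3^2*t12 + t1*t2*t3*n1^2*n2^2*n3^4 + t1*t2*t3*n1^2*n2^4*n3^2 + t1*t2*t3*n1^4*n3^4 + 3*t1*t2*t3*n1^4*n2^2*n3^2 + t1*t2*t3*n1^4*n2^4 + t1*t2*t3^3*n1^2*n2^2*n3^2 + t1*t2^3*t3*n1^2*n2^2*n3^2 + (-1)*t1^2*n1^3*n2*n3^3*t23 + (-1)*t1^2*n1^3*n2^3*n3*t23 + t1^2*n1^3*n2^3*n3^3 + t1^2*n1^5*n2*n3^3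 + t1^2*n1^5*n2^3*n3 + t1^2*t3^2*n1^3*n2*n3^3 + t1^2*t3^2*n1^3*n2^3*n3 + t1^2*t2^2*n1^3*n2*n3^3 + t1^2*t2^2*n1^3*n2^3*n3 + t1^2*t2^2*t3^2*n1*n2*n3^3 + t1^2*t2^2*t3^2*n1*n2^3*n3 + t1^3*t2*t3*n1^2*n2^2*n3^2) * hprod + (t2^2*t3^2*n1^4*n2^2*n3^2 + (-1)*t1*t2^2*t3^2*n1^3*n2^2*n3^2*m23*m321 + (-1)*t1*t2^2*t3^2*n1^3*n2^2*n3^2*m3*m13 + (-1)*t1*t2^2*t3^2*n1^3*n2^2*n3^2*m2*m12 + t1*t2^2*t3^2*n1^3*n2^2*n3^2*m2*m3*m321 + t1*t2^2*t3^2*n1^3*n2^2*n3^2*m1 + t1^2*t2^2*t3^2*n1^2*n2^2*n3^2) * e1 + ((-1)*t1*t2*t3^2*n1^4*n2^2*n3^2*m12 + t1*t2*t3^2*n1^4*n2^2*n3^2*m3*m321 + t1^2*t3^2*n1^4*n2^2*n3^2 + (-1)*t1^2*t2*t3^2*n1^3*n2^2*n3^2*m13*m321 + (-1)*t1^2*t2*t3^2*n1^3*n2^2*n3^2*m3*m23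 + t1^2*t2*t3^2*n1^3*n2^2*n3^2*m2 + t1^2*t2^2*t3^2*n1^2*n2^2*n3^2 + (-1)*t1^3*t2*t3^2*n1^2*n2^2*n3^2*m12 + t1^3*t2*t3^2*n1^2*n2^2*n3^2*m3*m321) * e2 + (t1*t2*t3*n1^5*n2^2*n3^2*m321 + (-1)*t1*t2^2*t3*n1^4*n2^2*n3^2*m13 + t1*t2^3*t3*n1^3*n2^2*n3^2*m321 + (-1)*t1^2*t2*t3*n1^4*n2^2*n3^2*m23 + t1^2*t2^2*n1^4*n2^2*n3^2 + (-1)*t1^2*t2^2*t3*n1^3*n2^2*n3^2*m12*m321 + t1^2*t2^2*t3*n1^3*n2^2*n3^2*m3 + t1^2*t2^2*t3^2*n1^2*n2^2*n3^2 + (-1)*t1^2*t2^3*t3*n1^2*n2^2*n3^2*m23 + t1^3*t2*t3*n1^3*n2^2*n3^2*m321 + (-1)*t1^3*t2^2*t3*n1^2*n2^2*n3^2*m13 + t1^3*t2^3*t3*n1*n2^2*n3^2*m321) * e3 + (t3^2*n1^4*n2^2*n3^2*t12 + (-1)*t3^2*n1^6*n2^2*n3^2 + (-1)*t2^2*t3^2*n1^4*n2^2*n3^2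 + (-1)*t1*t2*t3*n1^5*n2^2*n3^2*m321 + t1*t2*t3^2*n1^4*n2^2*n3^2*m23*m13 + t1*t2*t3^2*n1^4*n2^2*n3^2*m12 + (-1)*t1*t2*t3^3*n1^3*n2^2*n3^2*m321 + (-1)*t1^2*t3^2*n1^4*n2^2*n3^2 + (-1)*t1^2*t2^2*t3^2*n1^2*n2^2*n3^2) * e12 + (t1*t3*n1^4*n2^2*n3^2*t12*m13 + (-1)*t1*t2*t3*n1^5*n2^2*n3^2*m321 + t1^2*n1^4*n2^2*n3^2*t23 + (-1)*t1^2*n1^6*n2^2*n3^2 + (-1)*t1^2*t3^2*n1^4*n2^2*n3^2 + t1^2*t2*t3*n1^4*n2^2*n3^2*m23 + (-1)*t1^2*t2^2*n1^4*n2^2*n3^2 + (-1)*t1^2*t2^2*t3^2*n1^2*n2^2*n3^2 + (-1)*t1^3*t2*t3*n1^3*n2^2*n3^2*m321) * e23 + (n1^4*n2^2*n3^2*t12*t23 + t2^2*n1^4*n2^2*n3^2*t13 + (-1)*t2^2*n1^6*n2^2*n3^2 + (-1)*t2^2*t3^2*n1^4*n2^2*n3^2 + (-1)*t1*t2*t3*n1^5*n2^2*n3^2*m321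 + t1*t2^2*t3*n1^4*n2^2*n3^2*m13 + (-1)*t1*t2^3*t3*n1^3*n2^2*n3^2*m321 + (-1)*t1^2*t2^2*n1^4*n2^2*n3^2 + (-1)*t1^2*t2^2*t3^2*n1^2*n2^2*n3^2) * e13 + ((-1)*t1*t2*t3*n1^5*n2*n3*t13 + (-1)*t1*t2*t3*n1^5*n2*n3*t23 + (-1)*t1*t2*t3*n1^5*n2*n3*t12 + t1*t2*t3*n1^7*n2*n3 + (-1)*t1*t2*t3^3*n1^3*n2*n3*t12 + t1*t2*t3^3*n1^5*n2*n3 + (-1)*t1*t2^3*t3*n1^3*n2*n3*t13 + t1*t2^3*t3*n1^5*n2*n3 + t1*t2^3*t3^3*n1^3*n2*n3 + t1^2*t2^2*t3^2*n1^4*n3^2 + t1^2*t2^2*t3^2*n1^4*n2*n3*m321 + t1^2*t2^2*t3^2*n1^4*n2^2 + (-1)*t1^3*t2*t3*n1^3*n2*n3*t23 + t1^3*t2*t3*n1^5*n2*n3 + t1^3*t2*t3^3*n1^3*n2*n3 + t1^3*t2^3*t3*n1^3*n2*n3 + t1^3*t2^3*t3^3*n1*n2*n3) * e321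
  have h0 := (mul_eq_zero.mp key).resolve_right hM
  linear_combination h0
end

section
/- Let e₁, e₂, e₃ be a basis of V = ℂ³, let α₁, α₂, α₃ ∈ V*, and suppose each r_i := 1 + e_i⊗α_i is invertible (i.e. 1 + α_i(e_i) ≠ 0). If v ∈ V satisfies r₃r₂r₁v = v, then r_iv = v for i = 1, 2, 3. -/
open Matrix

lemma vecMulVec_mulVec' (w u x : Fin 3 → ℂ) :
    vecMulVec w u *ᵥ x = (u ⬝ᵥ x) • w := by
  ext i
  simp [vecMulVec, mulVec, dotProduct, Finset.mul_sum, Finset.sum_mul, mul_comm, mul_assoc,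
    mul_left_comm]

/-- If `e₁,e₂,e₃` is a basis of ℂ³, the pseudo-reflections `rᵢ = 1 + eᵢ⊗αᵢ` are
invertible, and `r₃r₂r₁v = v`, then `rᵢv = v` for each `i`.
Here `r 0, r 1, r 2` play the roles of `r₁, r₂, r₃`. -/
theorem stmt8 (e a : Fin 3 → Fin 3 → ℂ)
    (he : LinearIndependent ℂ e)
    (ht : ∀ i, 1 + a i ⬝ᵥ e i ≠ 0)
    (r : Fin 3 → Matrix (Fin 3) (Fin 3) ℂ)
    (hr : ∀ i, r i = 1 + vecMulVec (e i) (a i))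
    (v : Fin 3 → ℂ)
    (hv : (r 2 * r 1 * r 0) *ᵥ v = v) :
    ∀ i, r i *ᵥ v = v := by
  have hri : ∀ i x, r i *ᵥ x = x + (a i ⬝ᵥ x) • e i := by
    intro i x
    rw [hr i, add_mulVec, one_mulVec, vecMulVec_mulVec']
  set c0 := a 0 ⬝ᵥ v with hc0
  set v1 := v + c0 • e 0 with hv1
  set c1 := a 1 ⬝ᵥ v1 with hc1
  set v2 := v1 + c1 • e 1 with hv2
  set c2 := a 2 ⬝ᵥ v2 with hc2
  have hrv : (r 2 * r 1 * r 0) *ᵥ v = v2 + c2 • e 2 := by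
    rw [← mulVec_mulVec, ← mulVec_mulVec, hri 0, ← hc0, ← hv1, hri 1, ← hc1, ← hv2, hri 2, ← hc2]
  rw [hrv] at hv
  rw [hv2, hv1] at hv
  have hsum : c0 • e 0 + (c1 • e 1 + c2 • e 2) = 0 := by
    rw [add_assoc, add_assoc, add_eq_left] at hv
    exact hv
  have h := Fintype.linearIndependent_iff.mp he (fun i => ![c0, c1, c2] i)
  have h0 := h (by rw [Fin.sum_univ_three]; simpa [← add_assoc] using hsum)
  have e0 : c0 = 0 := by simpa using h0 0
  have e1 : c1 = 0 := by simpa using h0 1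
  have e2 : c2 = 0 := by simpa using h0 2
  have hv1' : v1 = v := by rw [hv1, e0]; simp
  have hv2' : v2 = v := by rw [hv2, e1, hv1']; simp
  have H0 : r 0 *ᵥ v = v := by rw [hri, ← hc0, e0]; simp
  have H1 : r 1 *ᵥ v = v := by
    rw [hri]
    have : a 1 ⬝ᵥ v = c1 := by rw [hc1, hv1']
    rw [this, e1]; simp
  have H2 : r 2 *ᵥ v = v := by
    rw [hri]
    have : a 2 ⬝ᵥ v = c2 := by rw [hc2, hv2']
    rw [this, e2]; simp
  intro i
  fin_cases i
  exacts [H0, H1, H2]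
end

section
/- (Killing–Coxeter factorisation.) Let e₁, …, e_n be a basis of V = ℂⁿ, let α₁, …, α_n ∈ V*, and suppose each r_i := 1 + e_i⊗α_i ∈ GL(V) is invertible, i.e. t_i² := 1 + α_i(e_i) ≠ 0. Let u be the n×n matrix with u_{ij} := α_i(e_j), let t² := diag(t₁², …, t_n²), let u₊ be the upper-triangular unipotent matrix with (u₊)_{jk} = u_{jk}/t_j² for j < k, and let u₋ be the lower-triangular unipotent matrix with (u₋)_{jk} = −u_{jk} for j > k (so that t²u₊ − u₋ = u). Then the matrix representing the product r_n⋯r₂r₁ in the basis (e_i) equals u₋⁻¹t²u₊; that is, if g is the matrix whose i-th column is e_i, then g⁻¹(r_n⋯r₂r₁)g = u₋⁻¹t²u₊. In particular this matrix lies in the big cell of GL_n(ℂ). -/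
open Matrix Finset

set_option linter.unusedVariables false in
noncomputable def KCc {n : ℕ} (u : Matrix (Fin n) (Fin n) ℂ) : Fin n → Fin n → ℂ
  | j => fun k => u j k + ∑ i : Fin n, if h : i < j then u j i * KCc u i k else 0
  termination_by j => (j : ℕ)
  decreasing_by exact h

theorem KCc_eq {n : ℕ} (u : Matrix (Fin n) (Fin n) ℂ) (j k : Fin n) :
    KCc u j k = u j k + ∑ i : Fin n, if i < j then u j i * KCc u i k else 0 := by
  rw [KCc]; simp

noncomputable def KCCm {n : ℕ} (u : Matrix (Fin n) (Fin n) ℂ) (m : ℕ) :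
    Matrix (Fin n) (Fin n) ℂ :=
  Matrix.of fun j k => if (j : ℕ) < m then KCc u j k else 0

theorem KCkey {n : ℕ} (e a : Fin n → Fin n → ℂ)
    (r : Fin n → Matrix (Fin n) (Fin n) ℂ)
    (hr : ∀ i, r i = 1 + vecMulVec (e i) (a i))
    (u g : Matrix (Fin n) (Fin n) ℂ)
    (hu : ∀ j k, u j k = a j ⬝ᵥ e k) (hg : ∀ j i, g j i = e i j) :
    ∀ m, m ≤ n → ((List.ofFn r).take m).reverse.prod * g = g * (1 + KCCm u m) := by
  intro m
  induction m with
  | zero =>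
    intro _
    have h0 : KCCm u 0 = 0 := by ext j k; simp [KCCm]
    simp [h0]
  | succ m ih =>
    intro hm1
    have hm : m < n := hm1
    have hP := ih (le_of_lt hm)
    set M : Fin n := ⟨m, hm⟩ with hM
    have htake : (List.ofFn r).take (m + 1) = (List.ofFn r).take m ++ [r M] := by
      rw [List.take_succ]
      congr 1
      have h' : (List.ofFn r)[m]? = some (r M) := by
        rw [List.getElem?_eq_getElem (by simpa using hm)]
        simp [List.getElem_ofFn]
        rfl
      rw [h']
      rfl
    rw [htake, List.reverse_append]
    simp only [List.reverse_cons, List.reverse_nil, List.nil_append, List.prod_cons,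
      List.prod_nil, List.singleton_append]
    rw [mul_assoc, hP]
    set G := g * (1 + KCCm u m) with hG
    have hcol : ∀ l k, G l k =
        e k l + ∑ i : Fin n, (if (i : ℕ) < m then KCc u i k * e i l else 0) := by
      intro l k
      rw [hG]
      simp only [Matrix.mul_apply, Matrix.add_apply, Matrix.one_apply, KCCm,
        Matrix.of_apply, hg, mul_add, Finset.sum_add_distrib, mul_ite, mul_zero, mul_one]
      congr 1
      · rw [Finset.sum_ite_eq' Finset.univ k (fun p => e p l)]
        simp
      · exact Finset.sum_congr rfl fun i _ => by split <;> ring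
    have hdot : ∀ k, (∑ l, a M l * G l k) = KCc u M k := by
      intro k
      have h1 : (∑ l, a M l * G l k) =
          (a M ⬝ᵥ e k) + ∑ i : Fin n,
            (if (i : ℕ) < m then KCc u i k * (a M ⬝ᵥ e i) else 0) := by
        simp only [hcol, mul_add, Finset.sum_add_distrib, dotProduct]
        congr 1
        have hpush : ∀ x, a M x * (∑ i : Fin n, if (i : ℕ) < m then KCc u i k * e i x else 0)
            = ∑ i : Fin n, (if (i : ℕ) < m then a M x * (KCc u i k * e i x) else 0) := by
          intro x
          rw [Finset.mul_sum]
          exact Finset.sum_congr rfl fun i _ => by split <;> simp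
        rw [Finset.sum_congr rfl fun x _ => hpush x, Finset.sum_comm]
        refine Finset.sum_congr rfl fun i _ => ?_
        by_cases h' : (i : ℕ) < m
        · simp only [h', if_true, Finset.mul_sum]
          exact Finset.sum_congr rfl fun l _ => by ring
        · simp [h']
      rw [h1, KCc_eq u M k, ← hu]
      congr 1
      refine Finset.sum_congr rfl fun i _ => ?_
      have hlt : (i < M) ↔ ((i : ℕ) < m) := Iff.rfl
      by_cases h' : (i : ℕ) < m
      · rw [if_pos h', if_pos (hlt.mpr h'), hu]; ring
      · rw [if_neg h', if_neg (fun hh => h' (hlt.mp hh))]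
    have hsingle : g * (1 + KCCm u (m + 1)) =
        G + Matrix.of (fun j k => e M j * KCc u M k) := by
      have hCm : KCCm u (m + 1) = KCCm u m +
          Matrix.of (fun p k => if p = M then KCc u M k else 0) := by
        ext p k
        simp only [KCCm, Matrix.add_apply, Matrix.of_apply]
        by_cases h1 : (p : ℕ) < m
        · have h2 : (p : ℕ) < m + 1 := by omega
          have h3 : p ≠ M := by
            intro hh
            rw [hh] at h1
            simp [hM] at h1
          simp [h1, h2, h3]
        · by_cases h2 : p = M
          · have hpm : (p : ℕ) = m := by rw [h2]
            have h4 : (p : ℕ) < m + 1 := by omega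
            rw [if_pos h4, if_neg h1, if_pos h2, h2, zero_add]
          · have hne : (p : ℕ) ≠ m := fun hh => h2 (Fin.ext hh)
            have h3 : ¬ (p : ℕ) < m + 1 := by omega
            simp [h1, h2, h3]
      have hgs : g * Matrix.of (fun p k => if p = M then KCc u M k else 0) =
          Matrix.of (fun j k => e M j * KCc u M k) := by
        ext j k
        simp only [Matrix.mul_apply, Matrix.of_apply, mul_ite, mul_zero]
        rw [Finset.sum_ite_eq' Finset.univ M (fun p => g j p * KCc u M k)]
        simp [hg]
      rw [hCm, ← add_assoc, mul_add, hgs, ← hG]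
    ext j k
    rw [hr M, hsingle]
    rw [add_mul, one_mul]
    have hv : (vecMulVec (e M) (a M) * G) j k = e M j * KCc u M k := by
      rw [Matrix.mul_apply]
      simp only [vecMulVec_apply]
      rw [← hdot k, Finset.mul_sum]
      exact Finset.sum_congr rfl fun l _ => by ring
    simp [Matrix.add_apply, hv]

/-- Killing–Coxeter factorisation: if `e₁,…,e_n` is a basis of ℂⁿ and
`rᵢ = 1 + eᵢ⊗αᵢ` are invertible pseudo-reflections, then the matrix of
`r_n⋯r₂r₁` in the basis `(eᵢ)` is `u₋⁻¹ t² u₊`, where `u = t²u₊ − u₋` is the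
decomposition of the pairing matrix `u_{jk} = αⱼ(e_k)` into diagonal, unipotent
upper- and lower-triangular parts.  Indices `0,…,n−1` play the roles of `1,…,n`,
so `(List.ofFn r).reverse.prod = r_n ⋯ r₂ r₁`. -/
theorem stmt10 (n : ℕ) (e a : Fin n → Fin n → ℂ)
    (he : LinearIndependent ℂ e)
    (ht : ∀ i, 1 + a i ⬝ᵥ e i ≠ 0)
    (r : Fin n → Matrix (Fin n) (Fin n) ℂ)
    (hr : ∀ i, r i = 1 + vecMulVec (e i) (a i))
    (u t2 uPlus uMinus g : Matrix (Fin n) (Fin n) ℂ)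
    (hu : ∀ j k, u j k = a j ⬝ᵥ e k)
    (ht2 : t2 = Matrix.diagonal fun i => 1 + a i ⬝ᵥ e i)
    (huPlus : ∀ j k, uPlus j k =
      if j = k then 1 else if j < k then u j k / (1 + a j ⬝ᵥ e j) else 0)
    (huMinus : ∀ j k, uMinus j k =
      if j = k then 1 else if k < j then -u j k else 0)
    (hg : ∀ j i, g j i = e i j) :
    g⁻¹ * (List.ofFn r).reverse.prod * g = uMinus⁻¹ * t2 * uPlus := by
  -- the full product
  have hfull : (List.ofFn r).reverse.prod * g = g * (1 + KCCm u n) := by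
    have := KCkey e a r hr u g hu hg n le_rfl
    rwa [List.take_of_length_le (by simp)] at this
  set C : Matrix (Fin n) (Fin n) ℂ := 1 + KCCm u n with hC
  -- g is invertible
  have hgU : IsUnit g := by
    rw [← Matrix.linearIndependent_cols_iff_isUnit]
    have : (fun i => gᵀ i) = e := by
      funext i j
      simp [Matrix.transpose_apply, hg]
    rw [show g.col = e from this]
    exact he
  -- uMinus is invertible
  have hMU : IsUnit uMinus.det := by
    have hbt : uMinus.BlockTriangular OrderDual.toDual := by
      intro i j hij
      have h1 : i ≠ j := by intro hh; subst hh; exact lt_irrefl _ hij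
      have h2 : ¬ j < i := by exact not_lt.mpr (le_of_lt hij)
      rw [huMinus, if_neg h1, if_neg h2]
    rw [Matrix.det_of_lowerTriangular uMinus hbt]
    have : ∀ i : Fin n, uMinus i i = 1 := fun i => by rw [huMinus, if_pos rfl]
    simp [this]
  -- key identity uMinus * C = t2 * uPlus
  have hkey2 : uMinus * C = t2 * uPlus := by
    ext j k
    have hCik : ∀ i, C i k = (if i = k then 1 else 0) + KCc u i k := by
      intro i
      simp [hC, KCCm, Matrix.one_apply, i.isLt]
    have hMsplit : ∀ i : Fin n, uMinus j i =
        (if j = i then 1 else 0) + (if i < j then -u j i else 0) := by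
      intro i
      rw [huMinus]
      by_cases h1 : j = i
      · subst h1; simp
      · by_cases h2 : i < j <;> simp [h1, h2]
    have lhs_eq : (uMinus * C) j k =
        C j k + ((if k < j then -u j k else 0) + ∑ i : Fin n,
          (if i < j then -u j i * KCc u i k else 0)) := by
      rw [Matrix.mul_apply]
      have : ∀ i, uMinus j i * C i k =
          (if j = i then C i k else 0) +
          ((if i < j then -u j i else 0) * (if i = k then 1 else 0) +
           (if i < j then -u j i * KCc u i k else 0)) := by
        intro i
        rw [hMsplit i, add_mul]
        congr 1
        · split <;> simp
        · rw [hCik i, mul_add]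
          congr 1
          split <;> ring
      rw [Finset.sum_congr rfl fun i _ => this i]
      rw [Finset.sum_add_distrib, Finset.sum_add_distrib]
      congr 1
      · rw [Finset.sum_ite_eq Finset.univ j (fun i => C i k)]
        simp
      · congr 1
        have : ∀ i, (if i < j then -u j i else 0) * (if i = k then 1 else 0)
            = if i = k then (if i < j then -u j i else 0) else 0 := by
          intro i; by_cases h : i = k <;> simp [h]
        rw [Finset.sum_congr rfl fun i _ => this i,
          Finset.sum_ite_eq' Finset.univ k (fun i => if i < j then -u j i else 0)]
        simp
    have rhs_eq : (t2 * uPlus) j k =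
        (if j = k then 1 else 0) + (if k < j then 0 else u j k) := by
      rw [ht2, Matrix.diagonal_mul, huPlus]
      by_cases h1 : j = k
      · subst h1
        simp [hu, add_comm]
      · by_cases h2 : j < k
        · rw [if_neg h1, if_pos h2]
          have h3 : ¬ k < j := by omega
          rw [if_neg h1, if_neg h3]
          rw [zero_add, mul_comm, div_mul_cancel₀ _ (ht j)]
        · have h3 : k < j := by
            rcases lt_trichotomy j k with h | h | h
            · exact absurd h h2
            · exact absurd h h1
            · exact h
          simp [h1, h2, h3]
    rw [lhs_eq, rhs_eq, hCik j, KCc_eq u j k]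
    have hsum : ∑ i : Fin n, (if i < j then -u j i * KCc u i k else 0) =
        -∑ i : Fin n, (if i < j then u j i * KCc u i k else 0) := by
      rw [← Finset.sum_neg_distrib]
      exact Finset.sum_congr rfl fun i _ => by split <;> ring
    rw [hsum]
    by_cases h : k < j <;> simp [h] <;> ring
  -- conclude
  have hCval : C = uMinus⁻¹ * (t2 * uPlus) := by
    rw [← hkey2, ← mul_assoc, Matrix.nonsing_inv_mul uMinus hMU, one_mul]
  have hgdet : IsUnit g.det := (Matrix.isUnit_iff_isUnit_det g).mp hgU
  rw [mul_assoc, hfull, ← mul_assoc, Matrix.nonsing_inv_mul g hgdet, one_mul,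
    hCval, mul_assoc]
end

section
/- Let e₁, …, e_n be a basis of ℂⁿ, α₁, …, α_n ∈ (ℂⁿ)*, r_j := 1 + e_j⊗α_j all invertible, u_{jk} := α_j(e_k), t_j² := 1 + u_{jj} ≠ 0. Fix i with 1 ≤ i ≤ n−1 and define the braid-transformed tuple by e′_k := e_k, α′_k := α_k for k ∉ {i,i+1}, e′_i := r_i⁻¹e_{i+1}, e′_{i+1} := e_i, α′_i := α_{i+1}∘r_i, α′_{i+1} := α_i. Let g (resp. g′) be the matrix with columns e_j (resp. e′_j), let P_i be the permutation matrix of the transposition (i, i+1), and let ξ_i be the matrix equal to the identity except that its (i,i+1) entry is u_{i,i+1}/t_i². Then g′ = g·ξ_i⁻¹P_i, and consequently the matrices a := g⁻¹(r_n⋯r₁)g and a′ := g′⁻¹(r_n⋯r₁)g′ of the product r_n⋯r₁ in the two bases satisfy a′ = P_iξ_i·a·ξ_i⁻¹P_i. -/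
open Matrix

private lemma vmv_mulVec {n : ℕ} (u v x : Fin n → ℂ) :
    vecMulVec u v *ᵥ x = (v ⬝ᵥ x) • u := by
  ext j
  simp only [mulVec, dotProduct, vecMulVec_apply, Pi.smul_apply, smul_eq_mul,
    Finset.sum_mul]
  exact Finset.sum_congr rfl fun m _ => by ring

private lemma vmv_mul_vmv {n : ℕ} (u v : Fin n → ℂ) :
    vecMulVec u v * vecMulVec u v = (v ⬝ᵥ u) • vecMulVec u v := by
  ext j k
  simp only [mul_apply, dotProduct, vecMulVec_apply, Matrix.smul_apply, smul_eq_mul,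
    Finset.sum_mul]
  exact Finset.sum_congr rfl fun m _ => by ring

/-- The braid group generator `γᵢ` acts on the matrix `a = g⁻¹(r_n⋯r₁)g` of the
(fixed) product of pseudo-reflections in the moving basis by
`a ↦ Pᵢ ξᵢ a ξᵢ⁻¹ Pᵢ`, where `Pᵢ` is the permutation matrix of `(i,i+1)` and
`ξᵢ` the elementary unipotent matrix with entry `uᵢ,ᵢ₊₁/tᵢ²`; moreover the new
basis matrix is `g′ = g ξᵢ⁻¹ Pᵢ`.  Here `i, i1` play the roles of `i, i+1` and
`(List.ofFn r).reverse.prod = r_n ⋯ r₁`. -/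
theorem stmt12 (n : ℕ) (e a e' a' : Fin n → Fin n → ℂ)
    (he : LinearIndependent ℂ e)
    (i i1 : Fin n) (hi : (i1 : ℕ) = (i : ℕ) + 1)
    (ht : ∀ j, 1 + a j ⬝ᵥ e j ≠ 0)
    (r : Fin n → Matrix (Fin n) (Fin n) ℂ)
    (hr : ∀ j, r j = 1 + vecMulVec (e j) (a j))
    (he' : ∀ k, k ≠ i → k ≠ i1 → e' k = e k)
    (ha' : ∀ k, k ≠ i → k ≠ i1 → a' k = a k)
    (he'i : e' i = (r i)⁻¹ *ᵥ e i1)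
    (he'i1 : e' i1 = e i)
    (ha'i : a' i = a i1 ᵥ* r i)
    (ha'i1 : a' i1 = a i)
    (g g' P xi : Matrix (Fin n) (Fin n) ℂ)
    (hg : ∀ j k, g j k = e k j)
    (hg' : ∀ j k, g' j k = e' k j)
    (hP : ∀ j k, P j k = if k = Equiv.swap i i1 j then 1 else 0)
    (hxi : xi = 1 + Matrix.single i i1 ((a i ⬝ᵥ e i1) / (1 + a i ⬝ᵥ e i))) :
    g' = g * xi⁻¹ * P ∧
    g'⁻¹ * (List.ofFn r).reverse.prod * g' =
      P * xi * (g⁻¹ * (List.ofFn r).reverse.prod * g) * xi⁻¹ * P := by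
  have hne : i ≠ i1 := by
    intro h; rw [h] at hi; omega
  set t : ℂ := 1 + a i ⬝ᵥ e i with hT
  have htne : t ≠ 0 := ht i
  set c : ℂ := (a i ⬝ᵥ e i1) / t with hc
  set E : Matrix (Fin n) (Fin n) ℂ := Matrix.single i i1 c with hE
  -- `xi` is invertible with inverse `1 - E`
  have hEE : E * E = 0 := Matrix.single_mul_single_of_ne (c := c) i i1 i (Ne.symm hne) c
  have hxi_mul : xi * (1 - E) = 1 := by
    rw [hxi, add_mul, one_mul, mul_sub, mul_one, hEE]
    try abel
  haveI := invertibleOfRightInverse _ _ hxi_mul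
  have hxiu : IsUnit xi := isUnit_of_invertible xi
  have hxi_inv : xi⁻¹ = 1 - E := inv_eq_right_inv hxi_mul
  -- inverse of `r i`
  set V : Matrix (Fin n) (Fin n) ℂ := vecMulVec (e i) (a i) with hV
  have hscal : t⁻¹ * (a i ⬝ᵥ e i) = 1 - t⁻¹ := by
    field_simp [hT]
    try ring
  have hr_mul : r i * (1 - t⁻¹ • V) = 1 := by
    rw [hr, mul_sub, mul_one, add_mul, one_mul, mul_smul_comm, ← hV, vmv_mul_vmv,
      smul_smul, hscal, sub_smul, one_smul]
    abel
  have hri : (r i)⁻¹ = 1 - t⁻¹ • V := inv_eq_right_inv hr_mul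
  -- the new basis vector at `i`
  have he'i2 : e' i = e i1 - c • e i := by
    rw [he'i, hri, sub_mulVec, one_mulVec, smul_mulVec, vmv_mulVec, smul_smul, hc,
      div_eq_inv_mul]
  -- permutation matrix facts
  have hPswap : ∀ (A : Matrix (Fin n) (Fin n) ℂ) j k,
      (A * P) j k = A j (Equiv.swap i i1 k) := by
    intro A j k
    rw [mul_apply]
    have h1 : ∀ m, A j m * P m k =
        if m = Equiv.swap i i1 k then A j (Equiv.swap i i1 k) else 0 := by
      intro m
      by_cases h : m = Equiv.swap i i1 k
      · subst h; simp [hP, Equiv.swap_apply_self]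
      · have h2 : k ≠ Equiv.swap i i1 m := by
          intro h3
          exact h (by rw [h3, Equiv.swap_apply_self])
        simp [hP, h2, h]
    simp [h1]
  have hPP : P * P = 1 := by
    ext j k
    rw [hPswap, hP, one_apply]
    simp [Equiv.apply_eq_iff_eq, eq_comm]
  have hPinv : P⁻¹ = P := inv_eq_right_inv hPP
  -- first claim
  have hgg' : g' = g * xi⁻¹ * P := by
    rw [hxi_inv, mul_sub, mul_one]
    ext j k
    rw [hPswap, Matrix.sub_apply]
    rcases eq_or_ne k i with hki | hki
    · rw [hki, Equiv.swap_apply_left, hg' j i, he'i2,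
        Matrix.mul_single_apply_same, hg j i1, hg j i]
      simp [mul_comm]
    · rcases eq_or_ne k i1 with hki1 | hki1
      · rw [hki1, Equiv.swap_apply_right, hg' j i1, he'i1,
          Matrix.mul_single_apply_of_ne (c := c) i i1 j i hne, hg j i]
        ring
      · rw [Equiv.swap_apply_of_ne_of_ne hki hki1, hg' j k, he' k hki hki1,
          Matrix.mul_single_apply_of_ne (c := c) i i1 j k hki1, hg j k]
        ring
  refine ⟨hgg', ?_⟩
  -- second claim
  have hxi_inv_inv : xi⁻¹⁻¹ = xi :=
    nonsing_inv_nonsing_inv xi ((isUnit_iff_isUnit_det xi).mp hxiu)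
  have hg'inv : g'⁻¹ = P * xi * g⁻¹ := by
    rw [hgg', Matrix.mul_inv_rev, Matrix.mul_inv_rev, hPinv, hxi_inv_inv, Matrix.mul_assoc]
  rw [hg'inv, hgg']
  simp only [Matrix.mul_assoc]
end

section
/- (i) The identity 4·cos(2π/7)·cos(4π/7) + 4·cos²(2π/7) = 1 holds in ℝ. (ii) Define b₁, b₂ : ℤ³ → ℤ³ by b₁(x,y,z) := (1 − z − xy, y, x) and b₂(x,y,z) := (x, z, 1 − y − zx), and let S := {(0,0,0), (0,0,1), (0,1,0), (0,1,1), (1,0,0), (1,0,1), (1,1,0)}. Then S is invariant under both b₁ and b₂, and every element of S is obtained from (0,0,0) by finitely many applications of b₁ and b₂; in particular the orbit of (0,0,0) under the group generated by b₁ and b₂ has exactly 7 elements. -/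
/-- The reduced braid move `b₁(x,y,z) = (1 − z − xy, y, x)` on integer triples. -/
def kleinB1 (p : ℤ × ℤ × ℤ) : ℤ × ℤ × ℤ :=
  (1 - p.2.2 - p.1 * p.2.1, p.2.1, p.1)

/-- The reduced braid move `b₂(x,y,z) = (x, z, 1 − y − zx)` on integer triples. -/
def kleinB2 (p : ℤ × ℤ × ℤ) : ℤ × ℤ × ℤ :=
  (p.1, p.2.2, 1 - p.2.1 - p.2.2 * p.1)

/-- The seven-element set of branches of the Klein solution. -/
def kleinS : Finset (ℤ × ℤ × ℤ) :=
  {(0,0,0), (0,0,1), (0,1,0), (0,1,1), (1,0,0), (1,0,1), (1,1,0)}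

lemma klein_cos_sum :
    Real.cos (2 * Real.pi / 7) + Real.cos (4 * Real.pi / 7)
      + Real.cos (6 * Real.pi / 7) = -1/2 := by
  set θ := Real.pi / 7 with hθ
  have hsin : Real.sin θ ≠ 0 := by
    apply ne_of_gt
    apply Real.sin_pos_of_pos_of_lt_pi
    · positivity
    · rw [hθ]; nlinarith [Real.pi_pos]
  have h1 : Real.sin (3*θ) - Real.sin θ = 2 * Real.sin θ * Real.cos (2*θ) := by
    rw [Real.sin_sub_sin]; ring_nf
  have h2 : Real.sin (5*θ) - Real.sin (3*θ) = 2 * Real.sin θ * Real.cos (4*θ) := by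
    rw [Real.sin_sub_sin]; ring_nf
  have h3 : Real.sin (7*θ) - Real.sin (5*θ) = 2 * Real.sin θ * Real.cos (6*θ) := by
    rw [Real.sin_sub_sin]; ring_nf
  have h7 : Real.sin (7*θ) = 0 := by
    rw [hθ]
    rw [show 7 * (Real.pi / 7) = Real.pi by ring, Real.sin_pi]
  have key : 2 * Real.sin θ * (Real.cos (2*θ) + Real.cos (4*θ) + Real.cos (6*θ))
      = - Real.sin θ := by
    nlinarith [h1, h2, h3, h7]
  have : Real.cos (2*θ) + Real.cos (4*θ) + Real.cos (6*θ) = -1/2 := by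
    have h' : Real.sin θ * (2 * (Real.cos (2*θ) + Real.cos (4*θ) + Real.cos (6*θ)))
        = Real.sin θ * (-1) := by linarith [key]
    have := mul_left_cancel₀ hsin h'
    linarith
  calc Real.cos (2 * Real.pi / 7) + Real.cos (4 * Real.pi / 7) + Real.cos (6 * Real.pi / 7)
      = Real.cos (2*θ) + Real.cos (4*θ) + Real.cos (6*θ) := by rw [hθ]; ring_nf
    _ = -1/2 := this

/-- (i) `4cos(2π/7)cos(4π/7) + 4cos²(2π/7) = 1`; (ii) the seven-element set `S`
is invariant under `b₁, b₂`, every element of `S` is reachable from `(0,0,0)` by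
finitely many applications of `b₁` and `b₂`, and `S` has exactly 7 elements: the
orbit of `(0,0,0)` under the group generated by `b₁, b₂` has exactly 7 elements. -/
theorem stmt16 :
    (4 * Real.cos (2 * Real.pi / 7) * Real.cos (4 * Real.pi / 7)
        + 4 * Real.cos (2 * Real.pi / 7) ^ 2 = 1) ∧
    (∀ v ∈ kleinS, kleinB1 v ∈ kleinS ∧ kleinB2 v ∈ kleinS) ∧
    (∀ v ∈ kleinS, ∃ l : List (ℤ × ℤ × ℤ → ℤ × ℤ × ℤ),
      (∀ f ∈ l, f = kleinB1 ∨ f = kleinB2) ∧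
      l.foldl (fun x f => f x) (0, 0, 0) = v) ∧
    kleinS.card = 7 := by
  refine ⟨?_, ?_, ?_, by decide⟩
  · have hsum := klein_cos_sum
    have hprod : Real.cos (6 * Real.pi / 7) + Real.cos (2 * Real.pi / 7)
        = 2 * Real.cos (4 * Real.pi / 7) * Real.cos (2 * Real.pi / 7) := by
      rw [Real.cos_add_cos]; ring_nf
    have hsq : Real.cos (2 * Real.pi / 7) ^ 2 = 1/2 + Real.cos (2 * (2 * Real.pi / 7)) / 2 :=
      Real.cos_sq _
    have h4 : 2 * (2 * Real.pi / 7) = 4 * Real.pi / 7 := by ring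
    rw [h4] at hsq
    nlinarith [hsum, hprod, hsq]
  · intro v hv
    fin_cases hv <;> exact ⟨by decide, by decide⟩
  · intro v hv
    fin_cases hv
    · exact ⟨[], by simp, rfl⟩
    · exact ⟨[kleinB2], by simp, by decide⟩
    · exact ⟨[kleinB2, kleinB2, kleinB1], by simp, by decide⟩
    · exact ⟨[kleinB2, kleinB2], by simp, by decide⟩
    · exact ⟨[kleinB1], by simp, by decide⟩
    · exact ⟨[kleinB1, kleinB1], by simp, by decide⟩
    · exact ⟨[kleinB1, kleinB1, kleinB2], by simp, by decide⟩
end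

section
/- Define the polynomial F(t,y) := (162t³−243t²−243t+162)y⁷ + (−567t³+2268t²−567t)y⁶ + (−1701t³−1701t²)y⁵ + (1407t⁴+2856t³+1407t²)y⁴ + (14t⁵−2849t⁴−2849t³+14t²)y³ + (−21t⁵+3444t⁴−21t³)y² + (−567t⁵−567t⁴)y + (125t⁶−88t⁵+125t⁴), and the rational functions Y(s) := −(5s²−8s+5)(7s²−7s+4)/(s(s−2)(s+1)(2s−1)(4s²−7s+7)) and T(s) := (7s²−7s+4)²/(s³(4s²−7s+7)²). Then for every s ∈ ℂ with s(s−2)(s+1)(2s−1)(4s²−7s+7) ≠ 0, one has F(T(s), Y(s)) = 0. -/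
/-- The polynomial `F(t,y)` cutting out the Klein solution curve. -/
def kleinF (t y : ℂ) : ℂ :=
  (162*t^3 - 243*t^2 - 243*t + 162) * y^7
  + (-567*t^3 + 2268*t^2 - 567*t) * y^6
  + (-1701*t^3 - 1701*t^2) * y^5
  + (1407*t^4 + 2856*t^3 + 1407*t^2) * y^4
  + (14*t^5 - 2849*t^4 - 2849*t^3 + 14*t^2) * y^3
  + (-21*t^5 + 3444*t^4 - 21*t^3) * y^2
  + (-567*t^5 - 567*t^4) * y
  + (125*t^6 - 88*t^5 + 125*t^4)

/-- The rational parameterisation of the Klein solution: `y`-coordinate. -/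
noncomputable def kleinY (s : ℂ) : ℂ :=
  -((5*s^2 - 8*s + 5) * (7*s^2 - 7*s + 4)) /
    (s * (s - 2) * (s + 1) * (2*s - 1) * (4*s^2 - 7*s + 7))

/-- The rational parameterisation of the Klein solution: `t`-coordinate. -/
noncomputable def kleinT (s : ℂ) : ℂ :=
  (7*s^2 - 7*s + 4)^2 / (s^3 * (4*s^2 - 7*s + 7)^2)

/-- Homogenised numerator of `kleinF (p/b) (n/a)`. -/
def kleinN (p n a b : ℂ) : ℂ :=
  (162) * p^3 * b^3 * n^7 * a^0
      + (-243) * p^2 * b^4 * n^7 * a^0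
      + (-243) * p^1 * b^5 * n^7 * a^0
      + (162) * p^0 * b^6 * n^7 * a^0
      + (-567) * p^3 * b^3 * n^6 * a^1
      + (2268) * p^2 * b^4 * n^6 * a^1
      + (-567) * p^1 * b^5 * n^6 * a^1
      + (-1701) * p^3 * b^3 * n^5 * a^2
      + (-1701) * p^2 * b^4 * n^5 * a^2
      + (1407) * p^4 * b^2 * n^4 * a^3
      + (2856) * p^3 * b^3 * n^4 * a^3
      + (1407) * p^2 * b^4 * n^4 * a^3
      + (14) * p^5 * b^1 * n^3 * a^4
      + (-2849) * p^4 * b^2 * n^3 * a^4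
      + (-2849) * p^3 * b^3 * n^3 * a^4
      + (14) * p^2 * b^4 * n^3 * a^4
      + (-21) * p^5 * b^1 * n^2 * a^5
      + (3444) * p^4 * b^2 * n^2 * a^5
      + (-21) * p^3 * b^3 * n^2 * a^5
      + (-567) * p^5 * b^1 * n^1 * a^6
      + (-567) * p^4 * b^2 * n^1 * a^6
      + (125) * p^6 * b^0 * n^0 * a^7
      + (-88) * p^5 * b^1 * n^0 * a^7
      + (125) * p^4 * b^2 * n^0 * a^7

/-- Division-free homogeneity identity. -/
lemma klein_aux (t y a b : ℂ) :
    kleinF t y * (a^7 * b^6) = kleinN (t*b) (y*a) a b := by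
  unfold kleinF kleinN
  ring

set_option maxHeartbeats 4000000 in
lemma klein_num (s : ℂ) :
    kleinN ((7*s^2 - 7*s + 4)^2)
      (-((5*s^2 - 8*s + 5) * (7*s^2 - 7*s + 4)))
      (s * (s - 2) * (s + 1) * (2*s - 1) * (4*s^2 - 7*s + 7))
      (s^3 * (4*s^2 - 7*s + 7)^2) = 0 := by
  unfold kleinN
  ring

/-- The rational parameterisation `(T(s), Y(s))` lies on the Klein solution
curve `F(t,y) = 0`. -/
theorem stmt17 :
    ∀ s : ℂ, s * (s - 2) * (s + 1) * (2*s - 1) * (4*s^2 - 7*s + 7) ≠ 0 →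
      kleinF (kleinT s) (kleinY s) = 0 := by
  intro s h
  have hs : s ≠ 0 := fun e => h (by simp [e])
  have h5 : 4*s^2 - 7*s + 7 ≠ 0 := by
    intro e; apply h; rw [e]; ring
  have hb : s^3 * (4*s^2 - 7*s + 7)^2 ≠ 0 :=
    mul_ne_zero (pow_ne_zero _ hs) (pow_ne_zero _ h5)
  have hab : (s * (s - 2) * (s + 1) * (2*s - 1) * (4*s^2 - 7*s + 7))^7
      * (s^3 * (4*s^2 - 7*s + 7)^2)^6 ≠ 0 :=
    mul_ne_zero (pow_ne_zero _ h) (pow_ne_zero _ hb)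
  have key := klein_aux (kleinT s) (kleinY s)
    (s * (s - 2) * (s + 1) * (2*s - 1) * (4*s^2 - 7*s + 7))
    (s^3 * (4*s^2 - 7*s + 7)^2)
  rw [show kleinT s * (s^3 * (4*s^2 - 7*s + 7)^2) = (7*s^2 - 7*s + 4)^2 from by
        unfold kleinT; exact div_mul_cancel₀ _ hb,
      show kleinY s * (s * (s - 2) * (s + 1) * (2*s - 1) * (4*s^2 - 7*s + 7))
          = -((5*s^2 - 8*s + 5) * (7*s^2 - 7*s + 4)) from by
        unfold kleinY; exact div_mul_cancel₀ _ h,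
      klein_num] at key
  exact (mul_eq_zero.mp key).resolve_right hab
end

section
/- Let φ := exp(2πi/7) ∈ ℂ and τ := −(1+φ²)(φ+φ⁴+φ⁶). If ε ∈ ℂ satisfies ε² − τε + 1 = 0 (equivalently ε ≠ 0 and ε + ε⁻¹ = τ), then ε is not a root of unity: εᴺ ≠ 1 for every positive integer N. -/
open Polynomial

/-- The cubic `X^3 - 3X^2 - 4X - 1` over `ℤ`. -/
noncomputable def cZ : ℤ[X] := X ^ 3 - C 3 * X ^ 2 - C 4 * X - C 1

lemma cZ_monic : cZ.Monic := by
  unfold cZ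
  monicity!

lemma cZ_irreducible : Irreducible cZ := by
  apply cZ_monic.irreducible_of_irreducible_map (Int.castRingHom (ZMod 2))
  have hmap : cZ.map (Int.castRingHom (ZMod 2)) = X ^ 3 + X ^ 2 + 1 := by
    unfold cZ
    simp only [Polynomial.map_sub, Polynomial.map_mul, Polynomial.map_pow, Polynomial.map_X,
      Polynomial.map_C]
    have h3 : ((Int.castRingHom (ZMod 2)) 3) = 1 := rfl
    have h4 : ((Int.castRingHom (ZMod 2)) 4) = 0 := rfl
    have h1 : ((Int.castRingHom (ZMod 2)) 1) = 1 := rfl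
    rw [h3, h4, h1, map_one, map_zero]
    have h2 : (2 : (ZMod 2)[X]) = 0 := by
      rw [← map_ofNat (C : ZMod 2 →+* (ZMod 2)[X]) 2, show (2 : ZMod 2) = 0 from rfl, map_zero]
    linear_combination (-X^2 - 1 : (ZMod 2)[X]) * h2
  rw [hmap]
  rw [irreducible_iff_roots_eq_zero_of_degree_le_three]
  · rw [Multiset.eq_zero_iff_forall_notMem]
    intro a ha
    have hne : (X ^ 3 + X ^ 2 + 1 : (ZMod 2)[X]) ≠ 0 := by
      intro h
      have := congrArg (fun p => Polynomial.coeff p 0) h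
      simp at this
    rw [mem_roots hne] at ha
    simp only [IsRoot, eval_add, eval_pow, eval_X, eval_one] at ha
    revert ha
    fin_cases a <;> decide
  · have : (X ^ 3 + X ^ 2 + 1 : (ZMod 2)[X]).natDegree = 3 := by
      compute_degree!
    omega
  · have : (X ^ 3 + X ^ 2 + 1 : (ZMod 2)[X]).natDegree = 3 := by
      compute_degree!
    omega

/-- The cubic over `ℚ`. -/
noncomputable def cQ : ℚ[X] := cZ.map (Int.castRingHom ℚ)

lemma cQ_irreducible : Irreducible cQ :=
  (IsPrimitive.Int.irreducible_iff_irreducible_map_cast cZ_monic.isPrimitive).mp cZ_irreducible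

lemma cQ_monic : cQ.Monic := cZ_monic.map _

lemma cQ_eq : cQ = X ^ 3 - C 3 * X ^ 2 - C 4 * X - C 1 := by
  unfold cQ cZ
  simp only [Polynomial.map_sub, Polynomial.map_mul, Polynomial.map_pow, Polynomial.map_X,
    Polynomial.map_C]
  norm_num

lemma aeval_cQ {K : Type*} [Field K] [Algebra ℚ K] (x : K) :
    aeval x cQ = x ^ 3 - 3 * x ^ 2 - 4 * x - 1 := by
  rw [cQ_eq]
  simp only [map_sub, map_pow, map_mul, aeval_X, aeval_C, map_one, map_ofNat]

/-- Let `φ = exp(2πi/7)` and `τ = −(1+φ²)(φ+φ⁴+φ⁶)`.  Any `ε ∈ ℂ` with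
`ε² − τε + 1 = 0` is not a root of unity. -/
theorem stmt19 (φ τ ε : ℂ)
    (hφ : φ = Complex.exp (2 * (Real.pi : ℂ) * Complex.I / 7))
    (hτ : τ = -((1 + φ^2) * (φ + φ^4 + φ^6)))
    (hε : ε^2 - τ * ε + 1 = 0) :
    ∀ N : ℕ, 0 < N → ε^N ≠ 1 := by
  -- φ^7 = 1
  have hφ7 : φ ^ 7 = 1 := by
    rw [hφ, ← Complex.exp_nat_mul]
    rw [show (7 : ℕ) * (2 * (Real.pi : ℂ) * Complex.I / 7) = 2 * Real.pi * Complex.I by ring]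
    exact Complex.exp_two_pi_mul_I
  have h2pi : (2 : ℂ) * Real.pi * Complex.I ≠ 0 := by
    simp [Real.pi_ne_zero, Complex.I_ne_zero, Complex.ofReal_ne_zero]
  have hφ1 : φ ≠ 1 := by
    rw [hφ]
    intro h
    rw [Complex.exp_eq_one_iff] at h
    obtain ⟨n, hn⟩ := h
    have key : ((7 * n : ℤ) : ℂ) * (2 * Real.pi * Complex.I)
        = 1 * (2 * Real.pi * Complex.I) := by
      push_cast
      linear_combination -7 * hn
    have h7 : ((7 * n : ℤ) : ℂ) = 1 := mul_right_cancel₀ h2pi key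
    have : (7 * n : ℤ) = 1 := by exact_mod_cast h7
    omega
  -- sum of 7th roots
  have hs : φ ^ 6 + φ ^ 5 + φ ^ 4 + φ ^ 3 + φ ^ 2 + φ + 1 = 0 := by
    have h := sub_eq_zero.mpr hφ7
    have hfac : (φ - 1) * (φ ^ 6 + φ ^ 5 + φ ^ 4 + φ ^ 3 + φ ^ 2 + φ + 1) = φ ^ 7 - 1 := by ring
    have := hfac.trans h
    rcases mul_eq_zero.mp this with h' | h'
    · exact absurd (sub_eq_zero.mp h') hφ1
    · exact h'
  -- the cubic satisfied by τ
  have hc : τ ^ 3 - 3 * τ ^ 2 - 4 * τ - 1 = 0 := by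
    subst hτ
    linear_combination (-42 - 47*φ - 40*φ^2 - 46*φ^3 - 41*φ^4 - 34*φ^5 - 45*φ^6 - 21*φ^7
      - 36*φ^8 - 18*φ^9 - 16*φ^10 - 20*φ^11 - 3*φ^12 - 15*φ^13 - 6*φ^15 - φ^17) * hφ7
      + (-43 : ℂ) * hs
  -- τ is integral with minimal polynomial cQ
  have hτroot : aeval τ cQ = 0 := by rw [aeval_cQ]; exact hc
  have hτint : IsIntegral ℚ τ := ⟨cQ, cQ_monic, by rwa [← aeval_def]⟩
  have hminpoly : minpoly ℚ τ = cQ :=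
    (minpoly.eq_of_irreducible_of_monic cQ_irreducible hτroot cQ_monic).symm
  -- a real root r of the cubic with r ≥ 4
  obtain ⟨r, hr_mem, hr_root⟩ : ∃ r ∈ Set.Icc (4:ℝ) 5, r^3 - 3*r^2 - 4*r - 1 = 0 := by
    have hcont : ContinuousOn (fun x : ℝ => x^3 - 3*x^2 - 4*x - 1) (Set.Icc 4 5) := by
      fun_prop
    have hiv := intermediate_value_Icc (by norm_num : (4:ℝ) ≤ 5) hcont
    have h0 : (0:ℝ) ∈ Set.Icc ((4:ℝ)^3 - 3*4^2 - 4*4 - 1) ((5:ℝ)^3 - 3*5^2 - 4*5 - 1) := by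
      norm_num
    obtain ⟨r, hr, hr'⟩ := hiv h0
    exact ⟨r, hr, hr'⟩
  intro N hN hεN
  -- ε ≠ 0 and ε integral
  have hεne : ε ≠ 0 := by
    intro h
    rw [h] at hεN
    simp [zero_pow hN.ne'] at hεN
  have hεint : IsIntegral ℚ ε := by
    refine ⟨X ^ N - C 1, ?_, ?_⟩
    · exact monic_X_pow_sub_C 1 hN.ne'
    · simp [eval₂_sub, eval₂_pow, hεN]
  -- build the embedding sending τ to r
  set S : Set ℂ := {τ, ε} with hS
  have hK : ∀ s ∈ S, IsIntegral ℚ s ∧ ((minpoly ℚ s).map (algebraMap ℚ ℂ)).Splits := by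
    intro s hs
    rcases hs with h | h
    · subst h; exact ⟨hτint, IsAlgClosed.splits _⟩
    · simp only [Set.mem_singleton_iff] at h
      subst h; exact ⟨hεint, IsAlgClosed.splits _⟩
  have hτmem : τ ∈ IntermediateField.adjoin ℚ S :=
    IntermediateField.subset_adjoin ℚ S (by left; rfl)
  have hεmem : ε ∈ IntermediateField.adjoin ℚ S :=
    IntermediateField.subset_adjoin ℚ S (by right; rfl)
  have hy : aeval ((r : ℂ)) (minpoly ℚ τ) = 0 := by
    rw [hminpoly, aeval_cQ]
    have : ((r:ℂ))^3 - 3*(r:ℂ)^2 - 4*(r:ℂ) - 1 = ((r^3 - 3*r^2 - 4*r - 1 : ℝ) : ℂ) := by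
      push_cast; ring
    rw [this, hr_root]
    simp
  obtain ⟨ψ, hψ⟩ := IntermediateField.exists_algHom_adjoin_of_splits_of_aeval hK hτmem hy
  have hrel : (⟨ε, hεmem⟩ : IntermediateField.adjoin ℚ S) ^ 2
      - (⟨τ, hτmem⟩ : IntermediateField.adjoin ℚ S) * ⟨ε, hεmem⟩ + 1 = 0 := by
    apply Subtype.ext
    push_cast
    exact hε
  have hpow : (⟨ε, hεmem⟩ : IntermediateField.adjoin ℚ S) ^ N = 1 := by
    apply Subtype.ext
    push_cast
    exact hεN
  set e : ℂ := ψ ⟨ε, hεmem⟩ with he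
  have hrel' : e ^ 2 - (r : ℂ) * e + 1 = 0 := by
    have h := congrArg ψ hrel
    simp only [map_sub, map_mul, map_add, map_pow, map_one, map_zero] at h
    rw [hψ] at h
    exact h
  have hpow' : e ^ N = 1 := by
    rw [he, ← map_pow, hpow, map_one]
  -- |e| = 1
  have habs : ‖e‖ = 1 := by
    have h1 : ‖e‖ ^ N = 1 := by
      rw [← norm_pow, hpow', norm_one]
    have h2 : (0:ℝ) ≤ ‖e‖ := norm_nonneg _
    rcases (pow_eq_one_iff_cases.mp h1) with h | h | h
    · omega
    · exact h
    · nlinarith [h.1]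
  have hene : e ≠ 0 := by
    intro h
    rw [h] at hpow'
    simp [zero_pow hN.ne'] at hpow'
  -- r = σe + (ψe)⁻¹, so |r| ≤ 2, contradiction with r ≥ 4
  have hsum : (r : ℂ) = e + e⁻¹ := by
    field_simp
    linear_combination -hrel'
  have hble : |r| ≤ 2 := by
    have : ‖(r : ℂ)‖ ≤ ‖e‖ + ‖e⁻¹‖ := by
      rw [hsum]; exact norm_add_le _ _
    rw [norm_inv, habs, Complex.norm_real, Real.norm_eq_abs] at this
    linarith
  have : (4:ℝ) ≤ r := hr_mem.1
  have : |r| ≥ 4 := le_trans this (le_abs_self r)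
  linarith
end
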